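/- Define f : ℂ⁴ → ℂ by f(x,y,z,λ) = x(y² + λz − 1)(λy² + λ²z − λ + 1) and F : ℂ⁴ → ℂ² by F(x,y,z,λ) = (f(x,y,z,λ), λ). Let b, λ ∈ ℂ with b ≠ 0 and λ ≠ 0. Then the map h : ℂ × (ℂ \ {0, −1/λ}) → ℂ⁴ defined by h(u,v) = (b/(v(λv + 1)), u, (v − u² + 1)/λ, λ) is injective, its image is exactly the fiber F⁻¹(b,λ), its inverse on the fiber is (x,y,z,λ) ↦ (y, y² + λz − 1), and h is a homeomorphism onto F⁻¹(b,λ). -/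

import Mathlib

/-- For `f(x,y,z,λ) = x(y² + λz − 1)(λy² + λ²z − λ + 1)`,
`F = (f, λ)`, `b ≠ 0`, `λ ≠ 0`, the map
`h(u,v) = (b/(v(λv + 1)), u, (v − u² + 1)/λ, λ)` on `ℂ × (ℂ \ {0, −1/λ})` is
injective, has image exactly `F⁻¹(b,λ)`, has inverse `(x,y,z,λ) ↦ (y, y² + λz − 1)`,
and is a homeomorphism onto `F⁻¹(b,λ)`. -/
theorem stmt_15 (f : ℂ × ℂ × ℂ × ℂ → ℂ)
    (hf : ∀ x y z l : ℂ, f (x, y, z, l) =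
      x * (y ^ 2 + l * z - 1) * (l * y ^ 2 + l ^ 2 * z - l + 1))
    (F : ℂ × ℂ × ℂ × ℂ → ℂ × ℂ)
    (hF : ∀ p : ℂ × ℂ × ℂ × ℂ, F p = (f p, p.2.2.2))
    (b l : ℂ) (hb : b ≠ 0) (hl : l ≠ 0)
    (h : ℂ × {v : ℂ // v ≠ 0 ∧ v ≠ -1 / l} → ℂ × ℂ × ℂ × ℂ)
    (hh : ∀ q : ℂ × {v : ℂ // v ≠ 0 ∧ v ≠ -1 / l},
      h q = (b / ((q.2 : ℂ) * (l * (q.2 : ℂ) + 1)), q.1,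
        ((q.2 : ℂ) - q.1 ^ 2 + 1) / l, l)) :
    Function.Injective h ∧
    Set.range h = F ⁻¹' {(b, l)} ∧
    (∀ p ∈ F ⁻¹' {(b, l)},
      ∃ hm : p.2.1 ^ 2 + l * p.2.2.1 - 1 ≠ 0 ∧ p.2.1 ^ 2 + l * p.2.2.1 - 1 ≠ -1 / l,
        h (p.2.1, ⟨p.2.1 ^ 2 + l * p.2.2.1 - 1, hm⟩) = p) ∧
    ∃ Φ : (ℂ × {v : ℂ // v ≠ 0 ∧ v ≠ -1 / l}) ≃ₜ (F ⁻¹' {(b, l)} : Set (ℂ × ℂ × ℂ × ℂ)),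
      ∀ q, (Φ q : ℂ × ℂ × ℂ × ℂ) = h q := by
  -- nonvanishing denominator
  have hl1 : ∀ v : ℂ, v ≠ -1 / l → l * v + 1 ≠ 0 := by
    intro v h1 hc
    apply h1
    field_simp
    linear_combination hc
  have hden : ∀ v : ℂ, v ≠ 0 → v ≠ -1 / l → v * (l * v + 1) ≠ 0 := fun v h0 h1 =>
    mul_ne_zero h0 (hl1 v h1)
  -- injectivity
  have hinj : Function.Injective h := by
    intro q1 q2 heq
    rw [hh, hh] at heq
    simp only [Prod.mk.injEq] at heq
    obtain ⟨-, h2, h3, -⟩ := heq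
    have hv : (q1.2 : ℂ) = q2.2 := by
      field_simp at h3
      rw [h2] at h3
      linear_combination h3
    have hv' : q1.2 = q2.2 := Subtype.ext hv
    exact Prod.ext h2 hv'
  -- membership characterization
  have hmem : ∀ p : ℂ × ℂ × ℂ × ℂ, p ∈ F ⁻¹' {(b, l)} ↔ f p = b ∧ p.2.2.2 = l := by
    intro p
    simp [hF, Prod.ext_iff]
  -- the inverse formula
  have hinv : ∀ p ∈ F ⁻¹' {(b, l)},
      ∃ hm : p.2.1 ^ 2 + l * p.2.2.1 - 1 ≠ 0 ∧ p.2.1 ^ 2 + l * p.2.2.1 - 1 ≠ -1 / l,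
        h (p.2.1, ⟨p.2.1 ^ 2 + l * p.2.2.1 - 1, hm⟩) = p := by
    rintro ⟨x, y, z, m⟩ hp
    rw [hmem] at hp
    obtain ⟨hfp, hm⟩ := hp
    simp only at hm
    subst hm
    rw [hf] at hfp
    have hfp' : x * ((y ^ 2 + m * z - 1) * (m * (y ^ 2 + m * z - 1) + 1)) = b := by
      linear_combination hfp
    have hprod : (y ^ 2 + m * z - 1) * (m * (y ^ 2 + m * z - 1) + 1) ≠ 0 := by
      intro hc
      apply hb
      rw [← hfp', hc, mul_zero]
    have hw0 : y ^ 2 + m * z - 1 ≠ 0 := fun hc => hprod (by rw [hc, zero_mul])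
    have hw1 : y ^ 2 + m * z - 1 ≠ -1 / m := by
      intro hc
      apply hprod
      rw [hc]
      field_simp
      ring
    refine ⟨⟨hw0, hw1⟩, ?_⟩
    rw [hh]
    simp only [Prod.mk.injEq]
    refine ⟨?_, trivial, ?_, trivial⟩
    · rw [div_eq_iff hprod]
      linear_combination hfp'.symm
    · rw [div_eq_iff hl]
      ring
  have hrange : Set.range h = F ⁻¹' {(b, l)} := by
    ext p
    constructor
    · rintro ⟨q, rfl⟩
      rw [hmem, hh, hf]
      refine ⟨?_, rfl⟩
      have hy2 : q.1 ^ 2 + l * (((q.2 : ℂ) - q.1 ^ 2 + 1) / l) - 1 = (q.2 : ℂ) := by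
        field_simp
        ring
      have hy3 : l * q.1 ^ 2 + l ^ 2 * (((q.2 : ℂ) - q.1 ^ 2 + 1) / l) - l + 1
          = l * (q.2 : ℂ) + 1 := by
        field_simp
        ring
      rw [hy2, hy3, div_mul_eq_mul_div, div_mul_eq_mul_div, div_eq_iff (hden _ q.2.2.1 q.2.2.2)]
      ring
    · intro hp
      obtain ⟨hm, heq⟩ := hinv p hp
      exact ⟨_, heq⟩
  refine ⟨hinj, hrange, hinv, ?_⟩
  have hcont : Continuous h := by
    have he : h = fun q : ℂ × {v : ℂ // v ≠ 0 ∧ v ≠ -1 / l} =>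
        (b / ((q.2 : ℂ) * (l * (q.2 : ℂ) + 1)), q.1,
          ((q.2 : ℂ) - q.1 ^ 2 + 1) / l, l) := funext hh
    rw [he]
    have hc2 : Continuous fun q : ℂ × {v : ℂ // v ≠ 0 ∧ v ≠ -1 / l} => (q.2 : ℂ) :=
      continuous_subtype_val.comp continuous_snd
    refine Continuous.prodMk ?_ (Continuous.prodMk continuous_fst
      (Continuous.prodMk ?_ continuous_const))
    · exact continuous_const.div (by fun_prop) (fun q => hden _ q.2.2.1 q.2.2.2)
    · exact ((hc2.sub ((continuous_fst.pow 2))).add continuous_const).div_const l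
  refine ⟨{
      toFun := fun q => ⟨h q, hrange ▸ Set.mem_range_self q⟩
      invFun := fun p => ((p : ℂ × ℂ × ℂ × ℂ).2.1,
        ⟨(p : ℂ × ℂ × ℂ × ℂ).2.1 ^ 2 + l * (p : ℂ × ℂ × ℂ × ℂ).2.2.1 - 1,
          (hinv p.1 p.2).choose⟩)
      left_inv := fun q => hinj (hinv (h q) (hrange ▸ Set.mem_range_self q)).choose_spec
      right_inv := fun p => Subtype.ext (hinv p.1 p.2).choose_spec
      continuous_toFun := hcont.subtype_mk _
      continuous_invFun := by
        refine Continuous.prodMk ?_ (Continuous.subtype_mk ?_ _) <;> fun_prop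
    }, fun q => rfl⟩
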